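/- Theorem 1(2): Let t, k ∈ ℝ with t ≠ 0 and k ∉ {0, −t}, and set p = b^t, l = c^t. The three points A, M'(k), M'(k+t) are not collinear; let O = (x_O, y_O) be their circumcenter, i.e. the unique point equidistant from all three. Then F⁻_{p,l}(x_O, y_O) = 0; i.e. these circumcenters lie on the same fixed conic F⁻_{p,l} = 0 as in Theorem 1(1). -/

import Mathlib

/-- The conic `F⁻_{p,l}(x,y) = 0` from the paper (with `c = |AB|`). -/
noncomputable def Fminus (xA yA c p l x y : ℝ) : ℝ :=
  4*y^2*yA^2*(p-l)^2 + x*y*yA*(p-l)^2*(8*xA-4)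
    + x^2*((p-l)^2*(2*xA-1)^2 - (p+l)^2)
    - 2*y*yA*(2*c^2*(p-l)^2 - (p+l)^2)
    + x*(-(2*c^2*(p-l)^2*(2*xA-1)) + 2*xA*(p+l)^2)
    + c^2*(c^2*(p-l)^2 - (p+l)^2)

lemma alg_aux (xA yA c p l m1 m2 O1 O2 : ℝ) (hyA : yA ≠ 0)
    (hc2 : c^2 = xA^2 + yA^2)
    (hrel : p*m2*(m1-1) = l*m1*(m2-1))
    (h1 : 2*O1 = m1 + m2)
    (h2 : xA^2 + yA^2 - 2*O1*xA - 2*O2*yA = m1^2 - 2*O1*m1) :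
    Fminus xA yA c p l O1 O2 = 0 := by
  have h4 : 4*yA^2 * Fminus xA yA c p l O1 O2 = 0 := by
    simp only [Fminus]
    linear_combination ((-4)*l^2*yA^2 + (4)*l^2*yA^4 + (4)*l^2*xA^2*yA^2 + (-8)*p*l*yA^2 + (-8)*p*l*yA^4 + (-8)*p*l*xA^2*yA^2 + (-4)*p^2*yA^2 + (4)*p^2*yA^4 + (4)*p^2*xA^2*yA^2 + (8)*O1*l^2*yA^2 + (-16)*O1*l^2*xA*yA^2 + (-16)*O1*p*l*yA^2 + (32)*O1*p*l*xA*yA^2 + (8)*O1*p^2*yA^2 + (-16)*O1*p^2*xA*yA^2 + (-16)*O2*l^2*yA^3 + (32)*O2*p*l*yA^3 + (-16)*O2*p^2*yA^3 + (4)*c^2*l^2*yA^2 + (-8)*c^2*p*l*yA^2 + (4)*c^2*p^2*yA^2) * hc2 +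
      ((-4)*l^2*yA^2 + (4)*l^2*yA^4 + (4)*l^2*xA^2*yA^2 + (-8)*p*l*yA^2 + (-8)*p*l*yA^4 + (-8)*p*l*xA^2*yA^2 + (-4)*p^2*yA^2 + (4)*p^2*yA^4 + (4)*p^2*xA^2*yA^2 + (4)*m1^2*l^2*yA^2 + (-8)*m1^2*p*l*yA^2 + (4)*m1^2*p^2*yA^2 + (8)*O1*l^2*yA^2 + (-8)*O1*l^2*xA*yA^2 + (-16)*O1*p*l*yA^2 + (16)*O1*p*l*xA*yA^2 + (8)*O1*p^2*yA^2 + (-8)*O1*p^2*xA*yA^2 + (-8)*O1*m1*l^2*yA^2 + (16)*O1*m1*p*l*yA^2 + (-8)*O1*m1*p^2*yA^2 + (-8)*O2*l^2*yA^3 + (16)*O2*p*l*yA^3 + (-8)*O2*p^2*yA^3) * h2 +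
      ((-4)*m2*p*l*yA^2 + (4)*m1*l^2*yA^2 + (4)*m1*p*l*yA^2 + (4)*m1*p^2*yA^2 + (-4)*m1*m2*l^2*yA^2 + (8)*m1*m2*p*l*yA^2 + (-4)*m1*m2*p^2*yA^2 + (4)*m1^2*m2*l^2*yA^2 + (-8)*m1^2*m2*p*l*yA^2 + (4)*m1^2*m2*p^2*yA^2 + (-4)*m1^3*l^2*yA^2 + (8)*m1^3*p*l*yA^2 + (-4)*m1^3*p^2*yA^2 + (-8)*O1*p*l*yA^2 + (-8)*O1*m1*l^2*yA^2 + (16)*O1*m1*p*l*yA^2 + (-8)*O1*m1*p^2*yA^2 + (8)*O1*m1^2*l^2*yA^2 + (-16)*O1*m1^2*p*l*yA^2 + (8)*O1*m1^2*p^2*yA^2) * h1 +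
      ((4)*m2*l*yA^2 + (-4)*m1*p*yA^2 + (-4)*m1*m2*l*yA^2 + (4)*m1*m2*p*yA^2) * hrel
  have h4' : (4*yA^2) ≠ 0 := by positivity
  exact (mul_eq_zero.1 h4).resolve_left h4'

lemma not_collinear_aux (xA yA m1 m2 : ℝ) (hyA : yA ≠ 0) (hm : m1 ≠ m2) :
    ¬ Collinear ℝ ({(xA, yA), (m1, 0), (m2, 0)} : Set (ℝ × ℝ)) := by
  intro hcol
  obtain ⟨v, hv⟩ := (collinear_iff_of_mem (by simp : ((m1, 0) : ℝ × ℝ) ∈ _)).1 hcol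
  obtain ⟨a, ha⟩ := hv (m2, 0) (by simp)
  obtain ⟨s, hs⟩ := hv (xA, yA) (by simp)
  have ha2 : a * v.2 = 0 := by
    have := congrArg Prod.snd ha
    simpa using this.symm
  have hs2 : yA = s * v.2 := by
    have := congrArg Prod.snd hs
    simpa using this
  have ha1 : m2 = a * v.1 + m1 := by
    have := congrArg Prod.fst ha
    simpa using this
  have hane : a ≠ 0 := by
    intro h
    rw [h, zero_mul, zero_add] at ha1
    exact hm ha1.symm
  have hv2 : v.2 = 0 := (mul_eq_zero.1 ha2).resolve_left hane
  exact hyA (by rw [hs2, hv2, mul_zero])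

theorem statement1 (xA yA : ℝ) (hyA : yA ≠ 0)
    (b c : ℝ) (hb : b = Real.sqrt ((xA - 1)^2 + yA^2))
    (hc : c = Real.sqrt (xA^2 + yA^2)) (hbc : b ≠ c)
    (t k : ℝ) (ht : t ≠ 0) (hk : k ≠ 0) (hkt : k ≠ -t)
    (p l : ℝ) (hp : p = b ^ t) (hl : l = c ^ t)
    (M' : ℝ → ℝ × ℝ) (hM' : ∀ s : ℝ, M' s = (c ^ s / (c ^ s - b ^ s), 0))
    (O : ℝ × ℝ)
    (hOA : (O.1 - xA)^2 + (O.2 - yA)^2 = (O.1 - (M' k).1)^2 + (O.2 - (M' k).2)^2)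
    (hOM : (O.1 - (M' k).1)^2 + (O.2 - (M' k).2)^2
        = (O.1 - (M' (k + t)).1)^2 + (O.2 - (M' (k + t)).2)^2) :
    ¬ Collinear ℝ ({(xA, yA), M' k, M' (k + t)} : Set (ℝ × ℝ)) ∧
      Fminus xA yA c p l O.1 O.2 = 0 := by
  have hyA2 : 0 < yA^2 := pow_pos (abs_pos.2 hyA) 2 |>.trans_eq (by rw [sq_abs])
  have hbP : 0 < b := hb ▸ Real.sqrt_pos.2 (by positivity)
  have hcP : 0 < c := hc ▸ Real.sqrt_pos.2 (by positivity)
  -- injectivity of rpow in the base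
  have base_inj : ∀ s : ℝ, s ≠ 0 → b ^ s = c ^ s → b = c := by
    intro s hs h
    have h1 : (b ^ s) ^ s⁻¹ = (c ^ s) ^ s⁻¹ := by rw [h]
    rwa [← Real.rpow_mul hbP.le, ← Real.rpow_mul hcP.le, mul_inv_cancel₀ hs,
      Real.rpow_one, Real.rpow_one] at h1
  have hpl : b ^ t ≠ c ^ t := fun h => hbc (base_inj t ht h)
  have hD1 : c ^ k - b ^ k ≠ 0 := by
    intro h
    exact hbc (base_inj k hk (sub_eq_zero.1 h).symm)
  have hktne : k + t ≠ 0 := fun h => hkt (by linarith)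
  have hD2 : c ^ (k + t) - b ^ (k + t) ≠ 0 := by
    intro h
    exact hbc (base_inj (k + t) hktne (sub_eq_zero.1 h).symm)
  have hbadd : b ^ (k + t) = b ^ k * b ^ t := Real.rpow_add hbP k t
  have hcadd : c ^ (k + t) = c ^ k * c ^ t := Real.rpow_add hcP k t
  have hbk : 0 < b ^ k := Real.rpow_pos_of_pos hbP k
  have hck : 0 < c ^ k := Real.rpow_pos_of_pos hcP k
  set m1 : ℝ := c ^ k / (c ^ k - b ^ k) with hm1
  set m2 : ℝ := c ^ (k + t) / (c ^ (k + t) - b ^ (k + t)) with hm2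
  have hMk : M' k = (m1, 0) := hM' k
  have hMkt : M' (k + t) = (m2, 0) := hM' (k + t)
  have hmne : m1 ≠ m2 := by
    intro h
    rw [hm1, hm2, div_eq_div_iff hD1 hD2] at h
    apply hpl
    have : c ^ k * b ^ k * (b ^ t) = c ^ k * b ^ k * (c ^ t) := by
      rw [hbadd, hcadd] at h; ring_nf at h ⊢; nlinarith [h]
    exact mul_left_cancel₀ (by positivity) this
  have hc2 : c ^ 2 = xA ^ 2 + yA ^ 2 := by
    rw [hc, Real.sq_sqrt (by positivity)]
  rw [hMk] at hOA
  rw [hMk, hMkt] at hOM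
  simp only at hOA hOM
  constructor
  · rw [hMk, hMkt]
    exact not_collinear_aux xA yA m1 m2 hyA hmne
  · -- from hOM : 2*O.1 = m1 + m2
    have hsum : 2 * O.1 = m1 + m2 := by
      have h0 : (m2 - m1) * (2 * O.1 - m1 - m2) = 0 := by linear_combination hOM
      rcases mul_eq_zero.1 h0 with h | h
      · exact absurd (by linarith [sub_eq_zero.1 h]) hmne
      · linarith
    have hE : xA^2+yA^2 - 2*O.1*xA - 2*O.2*yA = m1^2 - 2*O.1*m1 := by linear_combination hOA
    have hD2' : c ^ k * c ^ t - b ^ k * b ^ t ≠ 0 := by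
      rw [← hbadd, ← hcadd]; exact hD2
    have hrel : p*m2*(m1-1) = l*m1*(m2-1) := by
      rw [hm1, hm2, hbadd, hcadd, hp, hl]
      field_simp
      have hne : c ^ k * c ^ t - b ^ t * b ^ k ≠ 0 := by
        rw [mul_comm (b ^ t)]; exact hD2'
      rw [div_sub_one hne]
      congr 1
      ring
    have key := alg_aux xA yA c p l m1 m2 O.1 O.2 hyA hc2 hrel
      (by linarith) (by linarith)
    exact key
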